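/- Let c(n,k,1) denote the number of (n+k)-insets of a set X consisting of n main blocks of size 2 and one additional block with 1 element. Then for all n ≥ 1 and 0 ≤ k ≤ n, the coefficient of x^{n-k+1} in the Chebyshev polynomial of the first kind T_{n+k+1}(x) equals (-1)^k · c(n,k,1). -/

import Mathlib

open Polynomial Polynomial.Chebyshev Finset

lemma T_nat_add_two (m : ℕ) : T ℤ (↑(m+2)) = 2 * X * T ℤ (↑(m+1)) - T ℤ (↑m) := by
  push_cast; exact T_add_two ℤ m

lemma coeff_two_X_mul (p : ℤ[X]) (d : ℕ) : (2 * X * p).coeff (d+1) = 2 * p.coeff d := by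
  rw [mul_assoc, show (2:ℤ[X]) = C 2 by norm_num, coeff_C_mul, coeff_X_mul]

lemma coeff_two_X_mul_zero (p : ℤ[X]) : (2 * X * p).coeff 0 = 0 := by
  rw [mul_assoc, show (2:ℤ[X]) = C 2 by norm_num, coeff_C_mul]
  simp [coeff_X_mul_zero]

lemma Tcoeff_high : ∀ m d : ℕ, m < d → (T ℤ ↑m).coeff d = 0 := by
  intro m
  induction m using Nat.strong_induction_on with
  | _ m ih =>
    match m with
    | 0 => intro d hd; simp [T_zero, coeff_one]; omega
    | 1 => intro d hd; simp [T_one, coeff_X]; omega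
    | (m+2) =>
      intro d hd
      obtain ⟨e, rfl⟩ : ∃ e, d = e + 1 := ⟨d-1, by omega⟩
      rw [T_nat_add_two, coeff_sub, coeff_two_X_mul,
        ih (m+1) (by omega) e (by omega), ih m (by omega) (e+1) (by omega)]
      ring

lemma Tcoeff_zero : ∀ m : ℕ, (T ℤ ↑(2*m)).coeff 0 = (-1)^m ∧ (T ℤ ↑(2*m+1)).coeff 0 = 0 := by
  intro m
  induction m with
  | zero => simp
  | succ m ih =>
    constructor
    · rw [show 2*(m+1) = (2*m) + 2 from by ring, T_nat_add_two, coeff_sub,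
        coeff_two_X_mul_zero, ih.1, pow_succ]
      ring
    · rw [show 2*(m+1)+1 = (2*m+1) + 2 from by ring, T_nat_add_two, coeff_sub,
        coeff_two_X_mul_zero]
      rw [ih.2]
      ring

def M (n j : ℕ) : ℕ :=
  ((Finset.univ : Finset ((Fin n → Finset (Fin 2)) × Finset (Fin 1))).filter
    (fun fb => (∀ i, (fb.1 i).Nonempty) ∧ ((∑ i, (fb.1 i).card) + fb.2.card = n + j))).card

lemma M_vanish (n j : ℕ) (h : n + 2 ≤ j) : M n j = 0 := by
  rw [M, Finset.card_eq_zero, Finset.filter_eq_empty_iff]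
  rintro fb - ⟨h1, h2⟩
  have hs : ∑ i, (fb.1 i).card ≤ ∑ _i : Fin n, 2 :=
    Finset.sum_le_sum (fun i _ => by simpa using Finset.card_le_univ (fb.1 i))
  have hb : fb.2.card ≤ 1 := by simpa using Finset.card_le_univ fb.2
  simp [Finset.sum_const] at hs
  omega

lemma M_zero_zero : M 0 0 = 1 := by decide

lemma M_zero_one : M 0 1 = 1 := by decide

lemma fiber_bij (n j j' : ℕ) (s : Finset (Fin 2)) (hs : s.Nonempty)
    (h : n + 1 + j = n + j' + s.card) :
    ((Finset.univ : Finset ((Fin (n+1) → Finset (Fin 2)) × Finset (Fin 1))).filter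
      (fun fb => ((∀ i, (fb.1 i).Nonempty) ∧ ((∑ i, (fb.1 i).card) + fb.2.card = (n+1) + j))
        ∧ fb.1 (Fin.last n) = s)).card = M n j' := by
  rw [M]
  apply Finset.card_nbij' (fun fb => (Fin.init fb.1, fb.2))
      (fun gb => (Fin.snoc gb.1 s, gb.2))
  · rintro ⟨f, b⟩ (hf : _ ∈ Finset.filter _ _)
    simp only [Finset.mem_filter, Finset.mem_univ, true_and, Finset.mem_coe] at hf ⊢
    obtain ⟨⟨h1, h2⟩, h3⟩ := hf
    refine ⟨fun i => h1 _, ?_⟩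
    rw [Fin.sum_univ_castSucc] at h2
    simp only [Fin.init]
    rw [h3] at h2
    omega
  · rintro ⟨g, b⟩ (hg : _ ∈ Finset.filter _ _)
    simp only [Finset.mem_filter, Finset.mem_univ, true_and, Finset.mem_coe] at hg ⊢
    obtain ⟨h1, h2⟩ := hg
    refine ⟨⟨fun i => ?_, ?_⟩, Fin.snoc_last _ _⟩
    · induction i using Fin.lastCases with
      | last => simpa using hs
      | cast i => simpa using h1 i
    · rw [Fin.sum_univ_castSucc]
      simp only [Fin.snoc_castSucc, Fin.snoc_last]
      omega
  · rintro ⟨f, b⟩ (hf : _ ∈ Finset.filter _ _)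
    simp only [Finset.mem_filter, Finset.mem_univ, true_and] at hf
    have h3 := hf.2
    simp only [Prod.mk.injEq]
    exact ⟨by rw [← h3]; exact Fin.snoc_init_self f, trivial⟩
  · rintro ⟨g, b⟩ _
    simp only [Prod.mk.injEq]
    exact ⟨Fin.init_snoc _ _, trivial⟩

lemma M_fiber_decomp (n j : ℕ) :
    M (n+1) j = ∑ s : Finset (Fin 2),
      ((Finset.univ : Finset ((Fin (n+1) → Finset (Fin 2)) × Finset (Fin 1))).filter
        (fun fb => ((∀ i, (fb.1 i).Nonempty) ∧ ((∑ i, (fb.1 i).card) + fb.2.card = (n+1) + j))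
          ∧ fb.1 (Fin.last n) = s)).card := by
  rw [M]
  rw [Finset.card_eq_sum_card_fiberwise
    (f := fun fb : (Fin (n+1) → Finset (Fin 2)) × Finset (Fin 1) => fb.1 (Fin.last n))
    (t := Finset.univ) (fun _ _ => Finset.mem_univ _)]
  congr 1
  funext s
  rw [Finset.filter_filter]

lemma fiber_empty (n j : ℕ) :
    ((Finset.univ : Finset ((Fin (n+1) → Finset (Fin 2)) × Finset (Fin 1))).filter
      (fun fb => ((∀ i, (fb.1 i).Nonempty) ∧ ((∑ i, (fb.1 i).card) + fb.2.card = (n+1) + j))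
        ∧ fb.1 (Fin.last n) = (∅ : Finset (Fin 2)))).card = 0 := by
  rw [Finset.card_eq_zero, Finset.filter_eq_empty_iff]
  rintro fb - ⟨⟨h1, -⟩, h3⟩
  exact absurd h3 (Finset.nonempty_iff_ne_empty.mp (h1 _))

lemma univ_finset_fin2 :
    (Finset.univ : Finset (Finset (Fin 2))) = {∅, {0}, {1}, Finset.univ} := by decide

lemma M_succ_succ (n j : ℕ) : M (n+1) (j+1) = 2 * M n (j+1) + M n j := by
  rw [M_fiber_decomp, univ_finset_fin2]
  rw [Finset.sum_insert (by decide), Finset.sum_insert (by decide),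
    Finset.sum_insert (by decide), Finset.sum_singleton]
  rw [fiber_empty]
  rw [fiber_bij n (j+1) (j+1) {0} ⟨0, by decide⟩ (by simp; try omega)]
  rw [fiber_bij n (j+1) (j+1) {1} ⟨1, by decide⟩ (by simp; try omega)]
  rw [fiber_bij n (j+1) j Finset.univ ⟨0, by decide⟩ (by simp [Finset.card_univ]; omega)]
  ring

lemma M_succ_zero (n : ℕ) : M (n+1) 0 = 2 * M n 0 := by
  rw [M_fiber_decomp, univ_finset_fin2]
  rw [Finset.sum_insert (by decide), Finset.sum_insert (by decide),
    Finset.sum_insert (by decide), Finset.sum_singleton]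
  rw [fiber_empty]
  rw [fiber_bij n 0 0 {0} ⟨0, by decide⟩ (by simp; try omega)]
  rw [fiber_bij n 0 0 {1} ⟨1, by decide⟩ (by simp; try omega)]
  have huniv : ((Finset.univ : Finset ((Fin (n+1) → Finset (Fin 2)) × Finset (Fin 1))).filter
      (fun fb => ((∀ i, (fb.1 i).Nonempty) ∧ ((∑ i, (fb.1 i).card) + fb.2.card = (n+1) + 0))
        ∧ fb.1 (Fin.last n) = (Finset.univ : Finset (Fin 2)))).card = 0 := by
    rw [Finset.card_eq_zero, Finset.filter_eq_empty_iff]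
    rintro fb - ⟨⟨h1, h2⟩, h3⟩
    have hlow : ∑ _i : Fin n, 1 ≤ ∑ i : Fin n, (fb.1 i.castSucc).card :=
      Finset.sum_le_sum (fun i _ => Finset.card_pos.mpr (h1 _))
    rw [Fin.sum_univ_castSucc, h3] at h2
    simp [Finset.card_univ] at h2 hlow
    omega
  rw [huniv]
  ring

lemma M_top : ∀ n, M n (n+1) = 1 := by
  intro n
  induction n with
  | zero => exact M_zero_one
  | succ n ih => rw [M_succ_succ, M_vanish n (n+2) le_rfl, ih]

lemma cheb_eq_M : ∀ n k : ℕ, k ≤ n + 2 →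
    (T ℤ ↑(n + k + 1)).coeff (n + 1 - k) = (-1)^k * M n k := by
  intro n
  induction n with
  | zero =>
    intro k hk
    interval_cases k
    · simpa [M_zero_zero] using (by simp [coeff_X] : (T ℤ ↑(1:ℕ)).coeff 1 = 1)
    · have := (Tcoeff_zero 1).1
      norm_num at this ⊢
      rw [this, M_zero_one]
      ring
    · have := (Tcoeff_zero 1).2
      norm_num at this ⊢
      rw [this, M_vanish 0 2 le_rfl]
      simp
  | succ N IH =>
    intro k hk
    match k with
    | 0 =>
      have h1 := IH 0 (by omega)
      rw [show N + 1 + 0 + 1 = N + 2 from rfl, T_nat_add_two, coeff_sub,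
        show N + 1 + 1 - 0 = (N + 1) + 1 from rfl, coeff_two_X_mul,
        Tcoeff_high N (N+2) (by omega)]
      rw [show N + 0 + 1 = N + 1 from rfl, show N + 1 - 0 = N + 1 from rfl] at h1
      rw [h1, M_succ_zero]
      push_cast; ring
    | (k+1) =>
      rcases Nat.lt_or_ge k (N+1) with h1 | h1
      · -- k ≤ N
        have ihk1 := IH (k+1) (by omega)
        have ihk := IH k (by omega)
        rw [show N + 1 + (k+1) + 1 = (N + k + 1) + 2 from by ring, T_nat_add_two, coeff_sub,
          show N + 1 + 1 - (k+1) = (N - k) + 1 from by omega, coeff_two_X_mul]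
        rw [show N + (k+1) + 1 = N + k + 1 + 1 from by ring, show N + 1 - (k+1) = N - k from by omega] at ihk1
        rw [show N + 1 - k = (N - k) + 1 from by omega] at ihk
        rw [ihk1, ihk, M_succ_succ]
        push_cast; ring
      · rcases Nat.lt_or_ge k (N+2) with h2 | h2
        · -- k = N+1, k+1 = N+2
          have hkeq : k = N + 1 := by omega
          subst hkeq
          rw [show N + 1 + (N+1+1) + 1 = 2 * (N + 2) from by ring,
            show N + 1 + 1 - (N+1+1) = 0 from by omega, (Tcoeff_zero (N+2)).1,
            show N+1+1 = N+2 from rfl, M_top (N+1)]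
          simp
        · -- k = N+2, k+1 = N+3
          have hkeq : k = N + 2 := by omega
          subst hkeq
          rw [show N + 1 + (N+2+1) + 1 = 2 * (N + 2) + 1 from by ring,
            show N + 1 + 1 - (N+2+1) = 0 from by omega, (Tcoeff_zero (N+2)).2,
            M_vanish (N+1) (N+3) (by omega)]
          simp

/-- The ground set: `n` main blocks, the `i`-th of size `p i`, plus an
additional block of size `m`. -/
abbrev InsetGround (n : ℕ) (p : Fin n → ℕ) (m : ℕ) : Type :=
  (Σ i : Fin n, Fin (p i)) ⊕ Fin m

lemma card_decomp (n : ℕ) (U : Finset (InsetGround n (fun _ => 2) 1)) :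
    U.card = (∑ i : Fin n, (Finset.univ.filter (fun j : Fin 2 => Sum.inl ⟨i, j⟩ ∈ U)).card)
      + (Finset.univ.filter (fun y : Fin 1 => Sum.inr y ∈ U)).card := by
  rw [← Finset.card_toLeft_add_card_toRight (u := U)]
  congr 1
  · rw [Finset.card_eq_sum_card_fiberwise (f := Sigma.fst) (t := Finset.univ)
      (fun _ _ => Finset.mem_univ _)]
    refine Finset.sum_congr rfl (fun i _ => ?_)
    apply Finset.card_nbij' (fun x => x.2) (fun j => ⟨i, j⟩)
    · rintro ⟨i', j⟩ (hx : _ ∈ Finset.filter _ _)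
      simp only [Finset.mem_filter, Finset.mem_toLeft] at hx
      obtain ⟨hU, hi⟩ := hx
      subst hi
      simpa using hU
    · intro j hj
      simp only [Finset.mem_filter, Finset.mem_univ, true_and, Finset.mem_coe] at hj
      simp [hj]
    · rintro ⟨i', j⟩ (hx : _ ∈ Finset.filter _ _)
      simp only [Finset.mem_filter, Finset.mem_toLeft] at hx
      obtain ⟨-, hi⟩ := hx
      subst hi
      rfl
    · intro j _; rfl
  · congr 1
    ext y
    simp only [Finset.mem_toRight, Finset.mem_filter, Finset.mem_univ, true_and]

/-- `F n p m k` is the number of `(n+k)`-subsets of the ground set that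
intersect every main block (the "(n+k)-insets"). -/
def F (n : ℕ) (p : Fin n → ℕ) (m k : ℕ) : ℕ :=
  ((Finset.univ : Finset (Finset (InsetGround n p m))).filter
    (fun U => U.card = n + k ∧
      ∀ i : Fin n, ∃ x : Σ j : Fin n, Fin (p j), x.1 = i ∧ Sum.inl x ∈ U)).card

def Psi (n : ℕ) (fb : (Fin n → Finset (Fin 2)) × Finset (Fin 1)) :
    Finset (InsetGround n (fun _ => 2) 1) :=
  ((Finset.univ.sigma (fun i => fb.1 i)).map ⟨Sum.inl, Sum.inl_injective⟩)
    ∪ (fb.2.map ⟨Sum.inr, Sum.inr_injective⟩)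

lemma mem_Psi_inl {n : ℕ} {fb : (Fin n → Finset (Fin 2)) × Finset (Fin 1)} {i : Fin n}
    {j : Fin 2} : Sum.inl ⟨i, j⟩ ∈ Psi n fb ↔ j ∈ fb.1 i := by
  simp [Psi, Finset.mem_sigma]

lemma mem_Psi_inr {n : ℕ} {fb : (Fin n → Finset (Fin 2)) × Finset (Fin 1)} {y : Fin 1} :
    Sum.inr y ∈ Psi n fb ↔ y ∈ fb.2 := by
  simp [Psi]

lemma F_eq_M (n k : ℕ) : F n (fun _ => 2) 1 k = M n k := by
  rw [F, M]
  apply Finset.card_nbij'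
    (fun U => (fun i => Finset.univ.filter (fun j : Fin 2 => Sum.inl ⟨i, j⟩ ∈ U),
               Finset.univ.filter (fun y : Fin 1 => Sum.inr y ∈ U)))
    (fun fb => Psi n fb)
  · intro U hU
    simp only [Finset.mem_filter, Finset.mem_univ, true_and, Finset.mem_coe] at hU ⊢
    obtain ⟨hcard, hhit⟩ := hU
    constructor
    · intro i
      obtain ⟨⟨i', j⟩, hi, hU'⟩ := hhit i
      simp only at hi
      subst hi
      exact ⟨j, by simp [hU']⟩
    · rw [← card_decomp n U, hcard]
  · intro fb hfb
    simp only [Finset.mem_filter, Finset.mem_univ, true_and, Finset.mem_coe] at hfb ⊢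
    obtain ⟨hne, hsum⟩ := hfb
    constructor
    · rw [card_decomp n (Psi n fb)]
      simp only [mem_Psi_inl, mem_Psi_inr, Finset.filter_univ_mem]
      exact hsum
    · intro i
      obtain ⟨j, hj⟩ := hne i
      exact ⟨⟨i, j⟩, rfl, mem_Psi_inl.mpr hj⟩
  · intro U hU
    ext x
    rcases x with ⟨i, j⟩ | y
    · rw [mem_Psi_inl]
      simp
    · rw [mem_Psi_inr]
      simp only [Finset.mem_filter, Finset.mem_univ, true_and]
  · rintro ⟨f, b⟩ hfb
    simp only [Prod.mk.injEq]
    constructor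
    · funext i
      ext j
      simp [mem_Psi_inl]
    · ext y
      simp only [Finset.mem_filter, Finset.mem_univ, true_and, mem_Psi_inr]

open Polynomial in
theorem stmt_13 (n k : ℕ) (hn : 1 ≤ n) (hk : k ≤ n) :
    (Chebyshev.T ℤ ((n : ℤ) + k + 1)).coeff (n - k + 1) =
      (-1 : ℤ) ^ k * (F n (fun _ => 2) 1 k : ℤ) := by
  have h := cheb_eq_M n k (by omega)
  rw [show ((n:ℤ) + k + 1) = ((n + k + 1 : ℕ) : ℤ) from by push_cast; ring,
      show n - k + 1 = n + 1 - k from by omega, h, F_eq_M]
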